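/- arXiv:1711.06557 — 3 statements merged into one kernel-verified Lean document; each statement's English description precedes it below -/
import Mathlib

section
/- On the torus 𝕋ⁿ (n ≥ 2), if a continuous function f satisfies I_v f = 0 for every v ∈ 2πℤⁿ \ {0}, then f = 0. -/
open MeasureTheory Real

noncomputable section XrayAux

open Complex ComplexConjugate Set Submodule Function

namespace XrayTorus

instance : Fact (0 < 2 * π) := ⟨by positivity⟩

variable (n : ℕ)

abbrev X := Fin n → AddCircle (2 * π)

/-- The projection from `ℝⁿ` to the torus. -/
def proj : (Fin n → ℝ) → X n := fun x i => (x i : AddCircle (2 * π))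

lemma isOpenQuotientMap_proj : IsOpenQuotientMap (proj n) :=
  IsOpenQuotientMap.piMap fun _ => QuotientAddGroup.isOpenQuotientMap_mk

lemma proj_add (x y : Fin n → ℝ) : proj n (x + y) = proj n x + proj n y := rfl

/-- Characters of the torus. -/
def char (k : Fin n → ℤ) : C(X n, ℂ) :=
  ⟨fun z => ∏ i, fourier (k i) (z i),
    continuous_finset_prod _ fun i _ =>
      (fourier (k i)).continuous.comp (continuous_apply i)⟩

lemma char_apply (k : Fin n → ℤ) (z : X n) : char n k z = ∏ i, fourier (k i) (z i) := rfl

lemma fourier_add_arg {T : ℝ} (m : ℤ) (a b : AddCircle T) :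
    fourier m (a + b) = fourier m a * fourier m b := by
  rw [fourier_apply, fourier_apply, fourier_apply, smul_add, AddCircle.toCircle_add,
    Circle.coe_mul]

lemma char_add_apply (k : Fin n → ℤ) (z w : X n) :
    char n k (z + w) = char n k z * char n k w := by
  simp only [char_apply, ← Finset.prod_mul_distrib]
  exact Finset.prod_congr rfl fun i _ => fourier_add_arg (k i) (z i) (w i)

lemma exists_perp (hn : 2 ≤ n) (k : Fin n → ℤ) :
    ∃ w : Fin n → ℤ, w ≠ 0 ∧ ∑ i, k i * w i = 0 := by
  haveI : NeZero n := ⟨by omega⟩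
  rcases eq_or_ne k 0 with rfl | hk
  · refine ⟨Pi.single 0 1, ?_, by simp⟩
    intro h
    simpa using congrFun h 0
  · obtain ⟨i, hi⟩ := Function.ne_iff.mp hk
    haveI : Nontrivial (Fin n) := Fin.nontrivial_iff_two_le.mpr hn
    obtain ⟨j, hj⟩ := exists_ne i
    refine ⟨Pi.single j (k i) - Pi.single i (k j), ?_, ?_⟩
    · intro h
      have := congrFun h j
      simp [Pi.single_apply, hj, hi] at this
      exact hi this
    · have h1 : ∑ l, k l * (Pi.single j (k i) : Fin n → ℤ) l = k j * k i := by
        rw [Finset.sum_eq_single j]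
        · simp
        · intro b _ hb; simp [Pi.single_apply, hb]
        · simp
      have h2 : ∑ l, k l * (Pi.single i (k j) : Fin n → ℤ) l = k i * k j := by
        rw [Finset.sum_eq_single i]
        · simp
        · intro b _ hb; simp [Pi.single_apply, hb]
        · simp
      simp only [Pi.sub_apply, mul_sub, Finset.sum_sub_distrib, h1, h2]
      ring

lemma char_proj_smul (k w : Fin n → ℤ) (t : ℝ) (h : ∑ i, k i * w i = 0) :
    char n k (proj n (t • fun i => 2 * π * (w i : ℝ))) = 1 := by
  have : ∀ i : Fin n, proj n (t • fun i => 2 * π * (w i : ℝ)) i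
      = ((t * (2 * π * (w i : ℝ)) : ℝ) : AddCircle (2 * π)) := fun i => rfl
  simp only [char_apply, this]
  have hπ : (π : ℂ) ≠ 0 := by
    simpa using Complex.ofReal_ne_zero.mpr Real.pi_ne_zero
  calc ∏ i, fourier (k i) (((t * (2 * π * (w i : ℝ)) : ℝ)) : AddCircle (2 * π))
      = ∏ i, Complex.exp ((2 * π * Complex.I * t) * ((k i * w i : ℤ) : ℂ)) := by
        refine Finset.prod_congr rfl fun i _ => ?_
        rw [fourier_coe_apply]
        congr 1
        push_cast
        field_simp
    _ = Complex.exp (∑ i, (2 * π * Complex.I * t) * ((k i * w i : ℤ) : ℂ)) :=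
        (Complex.exp_sum _ _).symm
    _ = 1 := by
        rw [← Finset.mul_sum, ← Int.cast_sum, h]
        simp

/-- The star subalgebra generated by the characters. -/
def charAlgebra : StarSubalgebra ℂ C(X n, ℂ) where
  toSubalgebra := Algebra.adjoin ℂ (range (char n))
  star_mem' := by
    show Algebra.adjoin ℂ (range (char n)) ≤ star (Algebra.adjoin ℂ (range (char n)))
    refine Algebra.adjoin_le ?_
    rintro - ⟨k, rfl⟩
    refine Algebra.subset_adjoin ⟨-k, ?_⟩
    ext z
    show char n (-k) z = conj (char n k z)
    simp only [char_apply, map_prod]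
    refine Finset.prod_congr rfl fun i _ => ?_
    rw [Pi.neg_apply]
    exact fourier_neg

lemma charAlgebra_separatesPoints : (charAlgebra n).SeparatesPoints := by
  intro z w hzw
  obtain ⟨i, hi⟩ : ∃ i, z i ≠ w i := by
    by_contra h
    push_neg at h
    exact hzw (funext h)
  refine ⟨_, ⟨char n (Pi.single i 1), Algebra.subset_adjoin ⟨Pi.single i 1, rfl⟩, rfl⟩, ?_⟩
  have hval : ∀ y : X n, char n (Pi.single i 1) y = fourier 1 (y i) := by
    intro y
    rw [char_apply, Finset.prod_eq_single i]
    · simp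
    · intro b _ hb
      simp [Pi.single_apply, hb, fourier_zero]
    · simp
  dsimp only
  rw [hval, hval, fourier_one, fourier_one]
  intro hc
  rw [Circle.coe_inj] at hc
  exact hi (AddCircle.injective_toCircle (by positivity : (0:ℝ) < 2 * π).ne' hc)

lemma span_char_closure_eq_top :
    (span ℂ (range (char n))).topologicalClosure = ⊤ := by
  have hadj : (charAlgebra n).topologicalClosure = ⊤ :=
    ContinuousMap.starSubalgebra_topologicalClosure_eq_top_of_separatesPoints _
      (charAlgebra_separatesPoints n)
  have hcoe : Subalgebra.toSubmodule (charAlgebra n).toSubalgebra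
      = span ℂ (range (char n)) := by
    apply Algebra.adjoin_eq_span_of_subset
    refine Subset.trans ?_ Submodule.subset_span
    intro x hx
    refine Submonoid.closure_induction (fun _ => id) ⟨0, ?_⟩ ?_ hx
    · ext z
      simp [char_apply, fourier_zero]
    · rintro - - - - ⟨a, rfl⟩ ⟨b, rfl⟩
      refine ⟨a + b, ?_⟩
      ext z
      show char n (a + b) z = char n a z * char n b z
      simp only [char_apply, ← Finset.prod_mul_distrib]
      refine Finset.prod_congr rfl fun i _ => ?_
      rw [Pi.add_apply]
      exact fourier_add
  rw [← hcoe]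
  exact congr_arg (Subalgebra.toSubmodule <| StarSubalgebra.toSubalgebra ·) hadj

lemma integrable_cm {Y : Type*} [NormedAddCommGroup Y] (g : C(X n, Y)) :
    Integrable g (volume : Measure (X n)) := by
  refine (integrable_const ‖g‖).mono' g.continuous.aestronglyMeasurable ?_
  exact Filter.Eventually.of_forall fun z => g.norm_coe_le_norm z

end XrayTorus

end XrayAux

open XrayTorus

theorem xray_torus_injective (n : ℕ) (hn : 2 ≤ n) (f : (Fin n → ℝ) → ℂ)
    (hf : Continuous f)
    (hper : ∀ (x : Fin n → ℝ) (m : Fin n → ℤ),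
      f (x + fun i => 2 * π * m i) = f x)
    (hvanish : ∀ w : Fin n → ℤ, w ≠ 0 → ∀ x : Fin n → ℝ,
      ∫ t in (0:ℝ)..1, f (x + t • fun i => 2 * π * w i) = 0) :
    f = 0 := by
  classical
  -- descend f to a continuous map F on the torus
  have hq := isOpenQuotientMap_proj n
  have hwd : ∀ x y : Fin n → ℝ, proj n x = proj n y → f x = f y := by
    intro x y hxy
    have hmem : ∀ i, x i - y i ∈ AddSubgroup.zmultiples (2 * π) := by
      intro i
      have := congrFun hxy i
      simpa [proj, AddCircle, QuotientAddGroup.eq_iff_sub_mem] using this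
    choose m hm using fun i => AddSubgroup.mem_zmultiples_iff.mp (hmem i)
    have hxy' : x = y + fun i => 2 * π * (m i : ℝ) := by
      funext i
      have h := hm i
      simp only [zsmul_eq_mul] at h
      have : x i - y i = (m i : ℝ) * (2 * π) := h.symm
      simp only [Pi.add_apply]
      linarith
    rw [hxy', hper]
  obtain ⟨sec, hsec⟩ := hq.surjective.hasRightInverse
  let F : C(X n, ℂ) :=
    ⟨fun z => f (sec z), by
      rw [hq.isQuotientMap.continuous_iff]
      have : (fun z => f (sec z)) ∘ proj n = f := by
        funext x
        exact hwd _ _ (hsec (proj n x))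
      rw [this]
      exact hf⟩
  have hFp : ∀ x, F (proj n x) = f x := fun x => hwd _ _ (hsec (proj n x))
  haveI : IsFiniteMeasure (volume.restrict (Set.Ioc (0:ℝ) 1)) := by
    constructor
    rw [Measure.restrict_apply_univ]
    simp [Real.volume_Ioc]
  -- the key orthogonality relations
  have key : ∀ k : Fin n → ℤ, ∫ z, F z * char n k z ∂(volume : Measure (X n)) = 0 := by
    intro k
    obtain ⟨w, hw0, hwk⟩ := exists_perp n hn k
    set G : C(X n, ℂ) := F * char n k with hG
    set c : ℝ → X n := fun t => proj n (t • fun i => 2 * π * (w i : ℝ)) with hc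
    have hcc : Continuous c := hq.continuous.comp (continuous_id.smul continuous_const)
    have hinner : ∀ z : X n, ∫ t in Set.Ioc (0:ℝ) 1, G (z + c t) = 0 := by
      intro z
      obtain ⟨x, rfl⟩ := hq.surjective z
      have hGx : ∀ t : ℝ, G (proj n x + c t)
          = char n k (proj n x) * f (x + t • fun i => 2 * π * (w i : ℝ)) := by
        intro t
        show F (proj n x + c t) * char n k (proj n x + c t) = _
        have hpt : proj n x + c t = proj n (x + t • fun i => 2 * π * (w i : ℝ)) :=
          (proj_add n x _).symm
        rw [hpt, hFp, proj_add n x _, char_add_apply]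
        rw [show proj n (t • fun i => 2 * π * (w i : ℝ))
            = proj n (t • fun i => 2 * π * (w i : ℝ)) from rfl, char_proj_smul n k w t hwk]
        ring
      simp only [hGx]
      rw [MeasureTheory.integral_const_mul]
      rw [← intervalIntegral.integral_of_le (zero_le_one)]
      rw [hvanish w hw0 x, mul_zero]
    -- integrability on the product
    have hHc : Continuous fun q : X n × ℝ => G (q.1 + c q.2) :=
      G.continuous.comp (continuous_fst.add (hcc.comp continuous_snd))
    have hHint : Integrable (Function.uncurry fun (z : X n) (t : ℝ) => G (z + c t))
        ((volume : Measure (X n)).prod (volume.restrict (Set.Ioc (0:ℝ) 1))) := by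
      refine (integrable_const ‖G‖).mono' hHc.aestronglyMeasurable ?_
      exact Filter.Eventually.of_forall fun q => G.norm_coe_le_norm _
    have hswap := MeasureTheory.integral_integral_swap hHint
    have hzero : ∫ z, (∫ t in Set.Ioc (0:ℝ) 1, G (z + c t)) ∂(volume : Measure (X n)) = 0 := by
      simp only [hinner, integral_zero]
    rw [hswap] at hzero
    have hshift : ∀ t : ℝ, ∫ z, G (z + c t) ∂(volume : Measure (X n))
        = ∫ z, G z ∂(volume : Measure (X n)) := fun t =>
      integral_add_right_eq_self (fun z => G z) (c t)
    simp only [hshift] at hzero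
    rw [integral_const, measureReal_def, Measure.restrict_apply_univ, Real.volume_Ioc] at hzero
    exact (by simpa using hzero : ∫ z, G z ∂(volume : Measure (X n)) = 0)
  -- the functional g ↦ ∫ F g vanishes on all of C(X n, ℂ)
  have hFg : ∀ g : C(X n, ℂ), Integrable (fun z => F z * g z) (volume : Measure (X n)) :=
    fun g => integrable_cm n (F * g)
  let L : C(X n, ℂ) →ₗ[ℂ] ℂ :=
    { toFun := fun g => ∫ z, F z * g z ∂(volume : Measure (X n))
      map_add' := fun g h => by
        simp only [ContinuousMap.add_apply, mul_add]
        exact integral_add (hFg g) (hFg h)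
      map_smul' := fun a g => by
        simp only [ContinuousMap.smul_apply, smul_eq_mul, RingHom.id_apply]
        rw [← MeasureTheory.integral_const_mul]
        congr 1
        funext z
        ring }
  have hLb : ∀ g : C(X n, ℂ), ‖L g‖ ≤ (∫ z, ‖F z‖ ∂(volume : Measure (X n))) * ‖g‖ := by
    intro g
    refine (norm_integral_le_integral_norm _).trans ?_
    rw [← MeasureTheory.integral_mul_const]
    refine integral_mono ((hFg g).norm) (((integrable_cm n F).norm).mul_const _) fun z => ?_
    rw [norm_mul]
    exact mul_le_mul_of_nonneg_left (g.norm_coe_le_norm z) (norm_nonneg _)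
  let L' : C(X n, ℂ) →L[ℂ] ℂ := L.mkContinuous _ hLb
  have hL'app : ∀ g : C(X n, ℂ), L' g = ∫ z, F z * g z ∂(volume : Measure (X n)) := fun g => rfl
  have hker : ∀ g : C(X n, ℂ), L' g = 0 := by
    have h1 : Submodule.span ℂ (Set.range (char n)) ≤ LinearMap.ker (L' : C(X n, ℂ) →ₗ[ℂ] ℂ) := by
      rw [Submodule.span_le]
      rintro - ⟨k, rfl⟩
      exact LinearMap.mem_ker.mpr (key k)
    have h2 : (Submodule.span ℂ (Set.range (char n))).topologicalClosure ≤ LinearMap.ker (L' : C(X n, ℂ) →ₗ[ℂ] ℂ) :=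
      (Submodule.span ℂ (Set.range (char n))).topologicalClosure_minimal h1 (ContinuousLinearMap.isClosed_ker L')
    rw [span_char_closure_eq_top n] at h2
    intro g
    exact LinearMap.mem_ker.mp (h2 Submodule.mem_top)
  -- conclude F = 0
  have h0 : ∫ z, (Complex.normSq (F z) : ℝ) ∂(volume : Measure (X n)) = 0 := by
    have hk := hker (star F)
    rw [hL'app] at hk
    have heq : (fun z => F z * (star F) z) = fun z => ((Complex.normSq (F z) : ℝ) : ℂ) := by
      funext z
      rw [ContinuousMap.star_apply]
      exact (Complex.mul_conj (F z))
    have hco : ∫ z, ((Complex.normSq (F z) : ℝ) : ℂ) ∂(volume : Measure (X n))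
        = ((∫ z, Complex.normSq (F z) ∂(volume : Measure (X n)) : ℝ) : ℂ) := integral_ofReal
    rw [heq, hco] at hk
    exact_mod_cast hk
  have hnsq : (fun z => (Complex.normSq (F z) : ℝ)) = 0 := by
    have hi : Integrable (fun z => (Complex.normSq (F z) : ℝ)) (volume : Measure (X n)) :=
      integrable_cm n ⟨fun z => (Complex.normSq (F z) : ℝ),
        Complex.continuous_normSq.comp F.continuous⟩
    have hae := (MeasureTheory.integral_eq_zero_iff_of_nonneg
      (fun z => Complex.normSq_nonneg (F z)) hi).mp h0
    exact (Continuous.ae_eq_iff_eq (volume : Measure (X n))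
      (Complex.continuous_normSq.comp F.continuous) continuous_const).mp hae
  funext x
  have hx0 : Complex.normSq (F (proj n x)) = 0 := congrFun hnsq (proj n x)
  have hF0 : F (proj n x) = 0 := Complex.normSq_eq_zero.mp hx0
  rw [← hFp x]
  simpa using hF0
end

section
/- For 0 < r < t, the kernel K₀(r,t) = ∫_r^t 1/(√(1-(s/t)²) · s · √((s/r)²-1)) ds equals π/2. -/
open Real

set_option maxHeartbeats 1000000 in
theorem abel_kernel_K0 (r t : ℝ) (hr : 0 < r) (hrt : r < t) :
    ∫ s in r..t,
        1 / (Real.sqrt (1 - (s / t) ^ 2) * s * Real.sqrt ((s / r) ^ 2 - 1))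
      = π / 2 := by
  have ht : 0 < t := hr.trans hrt
  have hr0 : r ≠ 0 := hr.ne'
  have ht0 : t ≠ 0 := ht.ne'
  set c : ℝ := 1 / r ^ 2 - 1 / t ^ 2 with hc_def
  have hc : 0 < c := by
    rw [hc_def]
    have h1 : 1 / t ^ 2 < 1 / r ^ 2 :=
      one_div_lt_one_div_of_lt (by positivity) (by nlinarith)
    linarith
  set k : ℝ := 1 / r ^ 2 + 1 / t ^ 2 with hk_def
  set h : ℝ → ℝ := fun s => (2 / s ^ 2 - k) / c with hh_def
  set F : ℝ → ℝ := fun s => -(1 / 2) * Real.arcsin (h s) with hF_def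
  -- continuity of F away from 0
  have hFcont : ∀ x : ℝ, x ≠ 0 → ContinuousAt F x := by
    intro x hx
    apply ContinuousAt.mul continuousAt_const
    apply Real.continuous_arcsin.continuousAt.comp
    apply ContinuousAt.div_const
    exact (continuousAt_const.div (continuousAt_id.pow 2) (pow_ne_zero 2 hx)).sub
      continuousAt_const
  -- derivative of h
  have hderivh : ∀ x : ℝ, x ≠ 0 → HasDerivAt h (-4 / x ^ 3 / c) x := by
    intro x hx
    have h1 : HasDerivAt (fun s : ℝ => 2 / s ^ 2) (-4 / x ^ 3) x := by
      have h2 := ((hasDerivAt_pow 2 x).inv (pow_ne_zero 2 hx)).const_mul (2 : ℝ)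
      have h3 : (fun s : ℝ => 2 / s ^ 2) = fun s : ℝ => 2 * (s ^ 2)⁻¹ := by
        funext s; rw [div_eq_mul_inv]
      rw [h3]
      refine h2.congr_deriv ?_
      field_simp
      ring
    exact (h1.sub_const k).div_const c
  -- values of h at the endpoints
  have hhr : h r = 1 := by
    rw [hh_def]
    simp only
    rw [div_eq_one_iff_eq hc.ne', hk_def, hc_def]
    ring
  have hht : h t = -1 := by
    rw [hh_def]
    simp only
    rw [div_eq_iff hc.ne', hk_def, hc_def]
    ring
  -- key derivative computation on the open interval
  have key : ∀ x ∈ Set.Ioo r t, HasDerivAt F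
      (1 / (Real.sqrt (1 - (x / t) ^ 2) * x * Real.sqrt ((x / r) ^ 2 - 1))) x := by
    intro x hx
    obtain ⟨hxr, hxt⟩ := hx
    have hx0 : 0 < x := hr.trans hxr
    have hA2 : (0:ℝ) < 1 - (x / t) ^ 2 := by
      have : (x / t) ^ 2 < 1 := by
        rw [div_pow, div_lt_one (by positivity)]
        nlinarith
      linarith
    have hB2 : (0:ℝ) < (x / r) ^ 2 - 1 := by
      have : (1:ℝ) < (x / r) ^ 2 := by
        rw [div_pow, lt_div_iff₀ (by positivity)]
        nlinarith
      linarith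
    set A := Real.sqrt (1 - (x / t) ^ 2) with hA_def
    set B := Real.sqrt ((x / r) ^ 2 - 1) with hB_def
    have hA : 0 < A := Real.sqrt_pos.mpr hA2
    have hB : 0 < B := Real.sqrt_pos.mpr hB2
    have hAsq : A ^ 2 = 1 - (x / t) ^ 2 := Real.sq_sqrt hA2.le
    have hBsq : B ^ 2 = (x / r) ^ 2 - 1 := Real.sq_sqrt hB2.le
    -- h x is strictly between -1 and 1
    have hx2 : 1 / t ^ 2 < 1 / x ^ 2 :=
      one_div_lt_one_div_of_lt (by positivity) (by nlinarith)
    have hx2' : 1 / x ^ 2 < 1 / r ^ 2 :=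
      one_div_lt_one_div_of_lt (by positivity) (by nlinarith)
    have hhx1 : h x < 1 := by
      rw [hh_def]
      simp only
      rw [div_lt_one hc, hk_def, hc_def]
      have h4 : 2 / x ^ 2 = 2 * (1 / x ^ 2) := by ring
      rw [h4]; linarith
    have hhx2 : -1 < h x := by
      rw [hh_def]
      simp only
      rw [lt_div_iff₀ hc, hk_def, hc_def]
      have h4 : 2 / x ^ 2 = 2 * (1 / x ^ 2) := by ring
      rw [h4]; linarith
    -- the square root identity
    have hd : (1 : ℝ) / r ^ 2 - 1 / t ^ 2 ≠ 0 := by rw [← hc_def]; exact hc.ne'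
    have hd2 : t ^ 2 - r ^ 2 ≠ 0 := by nlinarith
    have hsqrt : Real.sqrt (1 - h x ^ 2) = 2 * A * B / (c * x ^ 2) := by
      have heq : 1 - h x ^ 2 = (2 * A * B / (c * x ^ 2)) ^ 2 := by
        have h5 : (2 * A * B / (c * x ^ 2)) ^ 2
            = 4 * (A ^ 2) * (B ^ 2) / (c ^ 2 * x ^ 4) := by
          rw [div_pow]; congr 1 <;> ring
        rw [h5, hAsq, hBsq, hh_def]
        simp only
        rw [hk_def, hc_def]
        field_simp [hd2]
        ring
      rw [heq, Real.sqrt_sq (by positivity)]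
    have harcsin := (Real.hasDerivAt_arcsin hhx2.ne' hhx1.ne).comp x
      (hderivh x hx0.ne')
    have hF' := harcsin.const_mul (-(1/2) : ℝ)
    have hgoal : -(1/2 : ℝ) * (1 / Real.sqrt (1 - h x ^ 2) * (-4 / x ^ 3 / c))
        = 1 / (A * x * B) := by
      rw [hsqrt]
      rw [one_div_div]
      field_simp
      ring
    rw [hF_def]
    rw [← hgoal]
    exact hF'
  -- nonnegativity of the integrand
  have hnonneg : ∀ x ∈ Set.Ioo r t,
      0 ≤ 1 / (Real.sqrt (1 - (x / t) ^ 2) * x * Real.sqrt ((x / r) ^ 2 - 1)) := by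
    intro x hx
    have hx0 : 0 < x := hr.trans hx.1
    exact div_nonneg zero_le_one
      (mul_nonneg (mul_nonneg (Real.sqrt_nonneg _) hx0.le) (Real.sqrt_nonneg _))
  -- integrability
  have hint : IntervalIntegrable
      (fun s => 1 / (Real.sqrt (1 - (s / t) ^ 2) * s * Real.sqrt ((s / r) ^ 2 - 1)))
      MeasureTheory.volume r t := by
    apply intervalIntegral.intervalIntegrable_deriv_of_nonneg
    · intro x hx
      rw [Set.uIcc_of_le hrt.le] at hx
      exact (hFcont x (hr.trans_le hx.1).ne').continuousWithinAt
    · simpa [min_eq_left hrt.le, max_eq_right hrt.le] using key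
    · simpa [min_eq_left hrt.le, max_eq_right hrt.le] using hnonneg
  -- endpoint values and limits
  have hFr : F r = -(π / 4) := by
    rw [hF_def]; simp only
    rw [hhr, Real.arcsin_one]; ring
  have hFt : F t = π / 4 := by
    rw [hF_def]; simp only
    rw [hht, Real.arcsin_neg_one]; ring
  have hlima : Filter.Tendsto F (nhdsWithin r (Set.Ioi r)) (nhds (-(π / 4))) := by
    rw [← hFr]
    exact ((hFcont r hr0).tendsto).mono_left nhdsWithin_le_nhds
  have hlimb : Filter.Tendsto F (nhdsWithin t (Set.Iio t)) (nhds (π / 4)) := by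
    rw [← hFt]
    exact ((hFcont t ht0).tendsto).mono_left nhdsWithin_le_nhds
  rw [intervalIntegral.integral_eq_sub_of_hasDerivAt_of_tendsto hrt key hint hlima hlimb]
  ring
end

section
/- If F : ℝ → ℝ is continuously differentiable with compact support, even, and satisfies |F'(z)| ≤ C·z for z ≥ 0, then G'(r) = ∫₀^∞ F'(√(z²+r²))/√(z²+r²) dz converges as r → 0⁺ to L = ∫₀^∞ F'(z)/z dz, with the quantitative bound |G'(r) - L| ≤ 2Cr. -/
open MeasureTheory Real Set Filter

theorem radon_limit_estimate (F : ℝ → ℝ) (hF : ContDiff ℝ 1 F)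
    (hsupp : HasCompactSupport F) (heven : ∀ x, F x = F (-x))
    (C : ℝ) (hC : 0 ≤ C)
    (hbound : ∀ z, |deriv F z| ≤ C * |z|)
    (hlip : ∀ a b, |deriv F a - deriv F b| ≤ C * |a - b|) :
    ∀ r > (0 : ℝ),
      |(∫ z in Set.Ioi (0 : ℝ),
            deriv F (Real.sqrt (z ^ 2 + r ^ 2)) / Real.sqrt (z ^ 2 + r ^ 2)) -
          ∫ z in Set.Ioi (0 : ℝ), deriv F z / z| ≤ 2 * C * r := by
  intro r hr
  set f := deriv F with hf
  have hfc : Continuous f := (hF.continuous_deriv le_rfl)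
  obtain ⟨M, hM0, hMsupp⟩ : ∃ M > 0, ∀ x : ℝ, M ≤ ‖x‖ → f x = 0 :=
    (hsupp.deriv).exists_pos_le_norm
  -- the substitution map
  set φ : ℝ → ℝ := fun s => Real.sqrt (s ^ 2 - r ^ 2) with hφ
  set φ' : ℝ → ℝ := fun s => s / Real.sqrt (s ^ 2 - r ^ 2) with hφ'
  have hsq : ∀ s ∈ Ioi r, (0:ℝ) < s ^ 2 - r ^ 2 := by
    intro s hs
    have : r < s := hs
    nlinarith
  have hsqrtpos : ∀ s ∈ Ioi r, 0 < Real.sqrt (s ^ 2 - r ^ 2) := fun s hs =>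
    Real.sqrt_pos.2 (hsq s hs)
  have hspos : ∀ s ∈ Ioi r, (0:ℝ) < s := fun s hs => hr.trans hs
  have hsqrtle : ∀ s ∈ Ioi r, Real.sqrt (s ^ 2 - r ^ 2) ≤ s := by
    intro s hs
    have hs0 := (hspos s hs).le
    calc Real.sqrt (s ^ 2 - r ^ 2) ≤ Real.sqrt (s ^ 2) := by
          apply Real.sqrt_le_sqrt; nlinarith
      _ = s := by rw [Real.sqrt_sq hs0]
  have hderivφ : ∀ s ∈ Ioi r, HasDerivAt φ (φ' s) s := by
    intro s hs
    have h1 : HasDerivAt (fun s : ℝ => s ^ 2 - r ^ 2) (2 * s) s := by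
      simpa using (hasDerivAt_pow 2 s).sub_const (r ^ 2)
    have h2 := (Real.hasDerivAt_sqrt (hsq s hs).ne').comp s h1
    refine h2.congr_deriv ?_
    have h3 := (hsqrtpos s hs).ne'
    rw [hφ']
    field_simp
  have hinj : InjOn φ (Ioi r) := by
    intro a ha b hb hab
    have h1 : a ^ 2 - r ^ 2 = b ^ 2 - r ^ 2 := by
      have := congrArg (fun x => x ^ 2) hab
      simpa [hφ, Real.sq_sqrt (hsq a ha).le, Real.sq_sqrt (hsq b hb).le] using this
    have ha' := hspos a ha
    have hb' := hspos b hb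
    nlinarith
  have himage : φ '' (Ioi r) = Ioi (0:ℝ) := by
    ext y
    constructor
    · rintro ⟨s, hs, rfl⟩
      exact hsqrtpos s hs
    · intro hy
      have hy' : (0:ℝ) < y := hy
      refine ⟨Real.sqrt (y ^ 2 + r ^ 2), ?_, ?_⟩
      · have : r < Real.sqrt (y ^ 2 + r ^ 2) := by
          rw [Real.lt_sqrt hr.le]
          nlinarith
        exact this
      · have h1 : Real.sqrt (y ^ 2 + r ^ 2) ^ 2 = y ^ 2 + r ^ 2 :=
          Real.sq_sqrt (by positivity)
        simp only [hφ, h1]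
        rw [show y ^ 2 + r ^ 2 - r ^ 2 = y ^ 2 by ring, Real.sqrt_sq hy'.le]
  -- the integrand on the left
  set g : ℝ → ℝ := fun z => f (Real.sqrt (z ^ 2 + r ^ 2)) / Real.sqrt (z ^ 2 + r ^ 2) with hg
  have hgcont : Continuous g := by
    apply Continuous.div
    · exact hfc.comp (Real.continuous_sqrt.comp ((continuous_pow 2).add continuous_const))
    · exact Real.continuous_sqrt.comp ((continuous_pow 2).add continuous_const)
    · intro z
      have : (0:ℝ) < Real.sqrt (z ^ 2 + r ^ 2) := Real.sqrt_pos.2 (by positivity)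
      exact this.ne'
  -- dominating function
  set D : ℝ → ℝ := (Ioc (0:ℝ) M).indicator (fun _ => C) with hD
  have hDint : Integrable D := by
    rw [hD, integrable_indicator_iff measurableSet_Ioc]
    exact integrableOn_const measure_Ioc_lt_top.ne
  have hgbound : ∀ z ∈ Ioi (0:ℝ), ‖g z‖ ≤ D z := by
    intro z hz
    have hz' : (0:ℝ) < z := hz
    have hs0 : (0:ℝ) < Real.sqrt (z ^ 2 + r ^ 2) := Real.sqrt_pos.2 (by positivity)
    by_cases hzM : z ≤ M
    · have hDz : D z = C := by
        rw [hD, indicator_of_mem (Set.mem_Ioc.2 ⟨hz', hzM⟩)]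
      rw [hDz]
      have h1 := hbound (Real.sqrt (z ^ 2 + r ^ 2))
      rw [abs_of_pos hs0] at h1
      rw [Real.norm_eq_abs, hg, abs_div, abs_of_pos hs0, div_le_iff₀ hs0]
      calc |f (Real.sqrt (z ^ 2 + r ^ 2))| ≤ C * Real.sqrt (z ^ 2 + r ^ 2) := h1
        _ = C * Real.sqrt (z ^ 2 + r ^ 2) := rfl
    · push_neg at hzM
      have hge : Real.sqrt (z ^ 2 + r ^ 2) ≥ z := by
        calc z = Real.sqrt (z ^ 2) := (Real.sqrt_sq hz'.le).symm
          _ ≤ Real.sqrt (z ^ 2 + r ^ 2) := Real.sqrt_le_sqrt (by nlinarith)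
      have hzero : f (Real.sqrt (z ^ 2 + r ^ 2)) = 0 := by
        apply hMsupp
        rw [Real.norm_eq_abs, abs_of_pos hs0]
        linarith
      have hDz : (0:ℝ) ≤ D z := by
        rw [hD]; exact indicator_nonneg (fun _ _ => hC) z
      rw [hg]
      simp only [hzero, zero_div, norm_zero]
      exact hDz
  have hgint : IntegrableOn g (Ioi (0:ℝ)) := by
    apply Integrable.mono' (hDint.restrict (s := Ioi 0)) hgcont.aestronglyMeasurable.restrict
    exact (ae_restrict_iff' measurableSet_Ioi).2 (Eventually.of_forall hgbound)
  -- change of variables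
  have hφderivWithin : ∀ s ∈ Ioi r, HasDerivWithinAt φ (φ' s) (Ioi r) s := fun s hs =>
    (hderivφ s hs).hasDerivWithinAt
  have hchange : (∫ z in Ioi (0:ℝ), g z) = ∫ s in Ioi r, |φ' s| • g (φ s) := by
    rw [← himage]
    exact integral_image_eq_integral_abs_deriv_smul measurableSet_Ioi hφderivWithin hinj g
  have hintegrand : ∀ s ∈ Ioi r, |φ' s| • g (φ s) = f s / Real.sqrt (s ^ 2 - r ^ 2) := by
    intro s hs
    have hs0 := hspos s hs
    have hq0 := hsqrtpos s hs
    have h1 : φ s ^ 2 + r ^ 2 = s ^ 2 := by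
      rw [hφ]; simp only [Real.sq_sqrt (hsq s hs).le]; ring
    have h2 : Real.sqrt (φ s ^ 2 + r ^ 2) = s := by
      rw [h1, Real.sqrt_sq hs0.le]
    have h3 : |φ' s| = s / Real.sqrt (s ^ 2 - r ^ 2) := by
      rw [hφ']; exact abs_of_pos (div_pos hs0 hq0)
    rw [smul_eq_mul, h3, hg]
    simp only [h2]
    field_simp
  have hchange2 : (∫ z in Ioi (0:ℝ), g z) = ∫ s in Ioi r, f s / Real.sqrt (s ^ 2 - r ^ 2) := by
    rw [hchange]
    exact setIntegral_congr_fun measurableSet_Ioi hintegrand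
  -- integrability of the transformed integrand
  have hBint : IntegrableOn (fun s => f s / Real.sqrt (s ^ 2 - r ^ 2)) (Ioi r) := by
    have h1 : IntegrableOn (fun s => |φ' s| • g (φ s)) (Ioi r) := by
      rw [← integrableOn_image_iff_integrableOn_abs_deriv_smul measurableSet_Ioi
        hφderivWithin hinj g, himage]
      exact hgint
    exact h1.congr_fun hintegrand measurableSet_Ioi
  -- integrability of f z / z on Ioi 0
  have hhmeas : AEStronglyMeasurable (fun z : ℝ => f z / z) (volume.restrict (Ioi (0:ℝ))) := by
    apply ContinuousOn.aestronglyMeasurable _ measurableSet_Ioi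
    apply ContinuousOn.div hfc.continuousOn continuousOn_id
    intro z hz
    exact ne_of_gt hz
  have hhbound : ∀ z ∈ Ioi (0:ℝ), ‖f z / z‖ ≤ D z := by
    intro z hz
    have hz' : (0:ℝ) < z := hz
    by_cases hzM : z ≤ M
    · rw [hD, indicator_of_mem (Set.mem_Ioc.2 ⟨hz', hzM⟩), Real.norm_eq_abs, abs_div, abs_of_pos hz',
        div_le_iff₀ hz']
      have := hbound z
      rw [abs_of_pos hz'] at this
      exact this
    · push_neg at hzM
      have hzero : f z = 0 := hMsupp z (by rw [Real.norm_eq_abs, abs_of_pos hz']; linarith)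
      rw [hzero]
      simp only [zero_div, norm_zero]
      rw [hD]; exact indicator_nonneg (fun _ _ => hC) z
  have hhint : IntegrableOn (fun z : ℝ => f z / z) (Ioi (0:ℝ)) := by
    apply Integrable.mono' (hDint.restrict (s := Ioi 0)) hhmeas
    exact (ae_restrict_iff' measurableSet_Ioi).2 (Eventually.of_forall hhbound)
  -- split the second integral
  have hsplit : (∫ z in Ioi (0:ℝ), f z / z) =
      (∫ z in Ioc 0 r, f z / z) + ∫ z in Ioi r, f z / z := by
    rw [← setIntegral_union (Set.Ioc_disjoint_Ioi le_rfl) measurableSet_Ioi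
      (hhint.mono_set (Set.Ioc_subset_Ioi_self)) (hhint.mono_set (Set.Ioi_subset_Ioi hr.le)),
      Set.Ioc_union_Ioi_eq_Ioi hr.le]
  -- the auxiliary integral ∫_{Ioi r} (s/√(s²-r²) - 1) = r
  set ψ : ℝ → ℝ := fun s => s / Real.sqrt (s ^ 2 - r ^ 2) - 1 with hψ
  set W : ℝ → ℝ := fun s => Real.sqrt (s ^ 2 - r ^ 2) - s with hW
  have hWderiv : ∀ s ∈ Ioi r, HasDerivAt W (ψ s) s := by
    intro s hs
    have := (hderivφ s hs).sub (hasDerivAt_id s)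
    exact this
  have hψpos : ∀ s ∈ Ioi r, 0 ≤ ψ s := by
    intro s hs
    have h1 := hsqrtle s hs
    have h2 := hsqrtpos s hs
    rw [hψ]
    have : (1:ℝ) ≤ s / Real.sqrt (s ^ 2 - r ^ 2) := (one_le_div h2).2 h1
    linarith
  have hWcont : ContinuousWithinAt W (Ici r) r := by
    apply Continuous.continuousWithinAt
    exact (Real.continuous_sqrt.comp ((continuous_pow 2).sub continuous_const)).sub continuous_id
  have hWtendsto : Tendsto W atTop (nhds 0) := by
    have heq : ∀ᶠ s in atTop, W s = -(r ^ 2) / (Real.sqrt (s ^ 2 - r ^ 2) + s) := by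
      filter_upwards [eventually_gt_atTop r] with s hs
      have h1 := hsqrtpos s ‹r < s›
      have h2 := hspos s ‹r < s›
      have hd : Real.sqrt (s ^ 2 - r ^ 2) + s > 0 := by linarith
      rw [hW, eq_div_iff hd.ne']
      have h3 : Real.sqrt (s ^ 2 - r ^ 2) ^ 2 = s ^ 2 - r ^ 2 := Real.sq_sqrt (hsq s ‹r < s›).le
      show (Real.sqrt (s ^ 2 - r ^ 2) - s) * (Real.sqrt (s ^ 2 - r ^ 2) + s) = -(r ^ 2)
      linear_combination h3
    rw [tendsto_congr' heq]
    apply Tendsto.div_atTop (tendsto_const_nhds)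
    apply tendsto_atTop_mono (fun s => ?_) tendsto_id
    · have : 0 ≤ Real.sqrt (s ^ 2 - r ^ 2) := Real.sqrt_nonneg _
      simp only [id]
      linarith
  have hψintval : (∫ s in Ioi r, ψ s) = r := by
    have := integral_Ioi_of_hasDerivAt_of_nonneg hWcont hWderiv hψpos hWtendsto
    rw [this, hW]
    simp [Real.sqrt_eq_zero']
  have hψint : IntegrableOn ψ (Ioi r) :=
    integrableOn_Ioi_deriv_of_nonneg hWcont hWderiv hψpos hWtendsto
  -- bound on the tail piece
  have hI2 : |(∫ s in Ioi r, f s / Real.sqrt (s ^ 2 - r ^ 2)) - ∫ s in Ioi r, f s / s| ≤ C * r := by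
    rw [← integral_sub hBint (hhint.mono_set (Set.Ioi_subset_Ioi hr.le))]
    have hptbound : ∀ s ∈ Ioi r,
        |f s / Real.sqrt (s ^ 2 - r ^ 2) - f s / s| ≤ C * ψ s := by
      intro s hs
      have hs0 := hspos s hs
      have hq0 := hsqrtpos s hs
      have hle := hsqrtle s hs
      have h1 : f s / Real.sqrt (s ^ 2 - r ^ 2) - f s / s
          = f s * (1 / Real.sqrt (s ^ 2 - r ^ 2) - 1 / s) := by ring
      rw [h1, abs_mul]
      have h2 : (0:ℝ) ≤ 1 / Real.sqrt (s ^ 2 - r ^ 2) - 1 / s := by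
        have := one_div_le_one_div_of_le hq0 hle
        linarith
      rw [abs_of_nonneg h2]
      have h3 : |f s| ≤ C * s := by
        have := hbound s; rwa [abs_of_pos hs0] at this
      calc |f s| * (1 / Real.sqrt (s ^ 2 - r ^ 2) - 1 / s)
          ≤ (C * s) * (1 / Real.sqrt (s ^ 2 - r ^ 2) - 1 / s) :=
            mul_le_mul_of_nonneg_right h3 h2
        _ = C * ψ s := by rw [hψ]; field_simp
    calc |∫ s in Ioi r, (f s / Real.sqrt (s ^ 2 - r ^ 2) - f s / s)|
        ≤ ∫ s in Ioi r, |f s / Real.sqrt (s ^ 2 - r ^ 2) - f s / s| := by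
          rw [← Real.norm_eq_abs]
          refine (norm_integral_le_integral_norm _).trans_eq ?_
          simp [Real.norm_eq_abs]
      _ ≤ ∫ s in Ioi r, C * ψ s := by
          apply setIntegral_mono_on
            ((hBint.sub (hhint.mono_set (Set.Ioi_subset_Ioi hr.le))).abs)
            (hψint.const_mul C) measurableSet_Ioi
          exact hptbound
      _ = C * r := by rw [MeasureTheory.integral_const_mul, hψintval]
  -- bound on the near-zero piece
  have hI1 : |∫ z in Ioc (0:ℝ) r, f z / z| ≤ C * r := by
    have h1 : ‖∫ z in Ioc (0:ℝ) r, f z / z‖ ≤ C * (volume (Ioc (0:ℝ) r)).toReal := by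
      apply norm_setIntegral_le_of_norm_le_const measure_Ioc_lt_top
      · intro z hz
        have hz0 : (0:ℝ) < z := hz.1
        rw [Real.norm_eq_abs, abs_div, abs_of_pos hz0, div_le_iff₀ hz0]
        have := hbound z; rwa [abs_of_pos hz0] at this
    rw [Real.volume_Ioc] at h1
    simp only [sub_zero] at h1
    rw [ENNReal.toReal_ofReal hr.le] at h1
    exact h1
  -- assemble
  have key : (∫ z in Ioi (0:ℝ), f (Real.sqrt (z ^ 2 + r ^ 2)) / Real.sqrt (z ^ 2 + r ^ 2))
      - (∫ z in Ioi (0:ℝ), f z / z)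
      = ((∫ s in Ioi r, f s / Real.sqrt (s ^ 2 - r ^ 2)) - ∫ s in Ioi r, f s / s)
        - ∫ z in Ioc (0:ℝ) r, f z / z := by
    have : (∫ z in Ioi (0:ℝ), f (Real.sqrt (z ^ 2 + r ^ 2)) / Real.sqrt (z ^ 2 + r ^ 2))
        = ∫ s in Ioi r, f s / Real.sqrt (s ^ 2 - r ^ 2) := hchange2
    rw [this, hsplit]
    ring
  rw [key]
  calc |((∫ s in Ioi r, f s / Real.sqrt (s ^ 2 - r ^ 2)) - ∫ s in Ioi r, f s / s)
        - ∫ z in Ioc (0:ℝ) r, f z / z|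
      ≤ |(∫ s in Ioi r, f s / Real.sqrt (s ^ 2 - r ^ 2)) - ∫ s in Ioi r, f s / s|
        + |∫ z in Ioc (0:ℝ) r, f z / z| := abs_sub _ _
    _ ≤ C * r + C * r := add_le_add hI2 hI1
    _ = 2 * C * r := by ring
end
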